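/- Let (c_n)_{n≥1} be a sequence of positive real numbers with lim_{n→∞} c_n = 0. Then there exists a sequence (C_n)_{n≥1} of positive real numbers with lim_{n→∞} C_n = 0 satisfying the three additional conditions: (i) c_n ≤ C_n for all n ≥ 1; (ii) (C_n) is decreasing; (iii) C_n ≤ √((n+1)/n)·C_{n+1} for all n ≥ 1. -/

import Mathlib

open Filter

noncomputable section

/-- Any positive sequence `(c n)` tending to `0` is dominated by a positive
sequence `(C n)` tending to `0` which is decreasing and satisfies
`C n ≤ √((n+1)/n) · C (n+1)` for all `n ≥ 1`. -/
theorem statement12 (c : ℕ → ℝ) (hpos : ∀ n : ℕ, 1 ≤ n → 0 < c n)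
    (hlim : Filter.Tendsto c Filter.atTop (nhds 0)) :
    ∃ C : ℕ → ℝ, Filter.Tendsto C Filter.atTop (nhds 0) ∧
      (∀ n : ℕ, 1 ≤ n → 0 < C n) ∧
      (∀ n : ℕ, 1 ≤ n → c n ≤ C n) ∧
      (∀ n : ℕ, 1 ≤ n → C (n + 1) ≤ C n) ∧
      (∀ n : ℕ, 1 ≤ n → C n ≤ Real.sqrt (((n : ℝ) + 1) / n) * C (n + 1)) := by
  have hBdd : BddAbove (Set.range c) := hlim.bddAbove_range
  set b : ℕ → ℝ := fun n => sSup (c '' Set.Ici n) with hbdef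
  have hbdd : ∀ n, BddAbove (c '' Set.Ici n) :=
    fun n => hBdd.mono (Set.image_subset_range c _)
  have hne : ∀ n, (c '' Set.Ici n).Nonempty :=
    fun n => ⟨c n, Set.mem_image_of_mem c (Set.mem_Ici.2 le_rfl)⟩
  have hbc : ∀ n k, n ≤ k → c k ≤ b n :=
    fun n k h => le_csSup (hbdd n) (Set.mem_image_of_mem c (Set.mem_Ici.2 h))
  have hcb : ∀ n, c n ≤ b n := fun n => hbc n n le_rfl
  have hbpos : ∀ n, 0 < b n := fun n =>
    lt_of_lt_of_le (hpos (max n 1) (le_max_right _ _)) (hbc n _ (le_max_left _ _))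
  have hbanti : Antitone b := fun n m h =>
    csSup_le_csSup (hbdd n) (hne m) (Set.image_mono (Set.Ici_subset_Ici.2 h))
  have hblim : Tendsto b atTop (nhds 0) := by
    rw [Metric.tendsto_atTop] at hlim ⊢
    intro ε hε
    obtain ⟨N, hN⟩ := hlim (ε / 2) (by linarith)
    refine ⟨N, fun n hn => ?_⟩
    have hble : b n ≤ ε / 2 := by
      refine csSup_le (hne n) ?_
      rintro x ⟨k, hk, rfl⟩
      have := hN k (le_trans hn hk)
      rw [Real.dist_eq, sub_zero] at this
      exact le_of_lt (lt_of_abs_lt this)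
    rw [Real.dist_eq, sub_zero, abs_of_pos (hbpos n)]
    linarith
  set C : ℕ → ℝ := fun n =>
    if h : 1 ≤ n then
      (Finset.Icc 1 n).sup' (Finset.nonempty_Icc.mpr h)
        (fun k : ℕ => Real.sqrt ((k : ℝ) / n) * b k)
    else b 1 with hCdef
  have hCeq : ∀ n (hn : 1 ≤ n), C n =
      (Finset.Icc 1 n).sup' (Finset.nonempty_Icc.mpr hn)
        (fun k : ℕ => Real.sqrt ((k : ℝ) / n) * b k) := by
    intro n hn
    simp only [hCdef, dif_pos hn]
  have hsqrt_self : ∀ n : ℕ, 1 ≤ n → Real.sqrt ((n : ℝ) / n) = 1 := by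
    intro n hn
    have : (n : ℝ) ≠ 0 := Nat.cast_ne_zero.mpr (by omega)
    rw [div_self this, Real.sqrt_one]
  have hbC : ∀ n, 1 ≤ n → b n ≤ C n := by
    intro n hn
    rw [hCeq n hn]
    have hmem : n ∈ Finset.Icc 1 n := Finset.mem_Icc.mpr ⟨hn, le_rfl⟩
    have := Finset.le_sup' (fun k : ℕ => Real.sqrt ((k : ℝ) / n) * b k) hmem
    rwa [hsqrt_self n hn, one_mul] at this
  have hCpos : ∀ n, 1 ≤ n → 0 < C n := fun n hn => lt_of_lt_of_le (hbpos n) (hbC n hn)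
  have hterm_le_b : ∀ n k : ℕ, 1 ≤ k → k ≤ n →
      Real.sqrt ((k : ℝ) / n) * b k ≤ b k := by
    intro n k hk hkn
    have hn0 : (0 : ℝ) < n := by
      have : 1 ≤ n := le_trans hk hkn
      exact_mod_cast Nat.pos_of_ne_zero (by omega)
    have h1 : Real.sqrt ((k : ℝ) / n) ≤ 1 := by
      rw [show (1 : ℝ) = Real.sqrt 1 by rw [Real.sqrt_one]]
      apply Real.sqrt_le_sqrt
      rw [div_le_one hn0]
      exact_mod_cast hkn
    nlinarith [hbpos k, Real.sqrt_nonneg ((k : ℝ) / n)]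
  refine ⟨C, ?_, hCpos, fun n hn => le_trans (hcb n) (hbC n hn), ?_, ?_⟩
  · -- Tendsto C atTop (𝓝 0)
    rw [Metric.tendsto_atTop]
    intro ε hε
    obtain ⟨K, hK⟩ := (Metric.tendsto_atTop.mp hblim) (ε / 2) (by linarith)
    have hbK : ∀ k, K ≤ k → b k < ε / 2 := by
      intro k hk
      have := hK k hk
      rwa [Real.dist_eq, sub_zero, abs_of_pos (hbpos k)] at this
    have haux : Tendsto (fun n : ℕ => Real.sqrt ((K : ℝ) / n) * b 1) atTop (nhds 0) := by
      have h1 : Tendsto (fun n : ℕ => (K : ℝ) / n) atTop (nhds 0) :=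
        tendsto_const_div_atTop_nhds_zero_nat (K : ℝ)
      have h2 : Tendsto (fun n : ℕ => Real.sqrt ((K : ℝ) / n)) atTop (nhds 0) := by
        have h3 := (Real.continuous_sqrt.tendsto 0).comp h1
        rw [Real.sqrt_zero] at h3
        exact h3
      have h4 := h2.mul_const (b 1)
      rw [zero_mul] at h4
      exact h4
    rw [Metric.tendsto_atTop] at haux
    obtain ⟨N1, hN1⟩ := haux (ε / 2) (by linarith)
    refine ⟨max N1 (K + 1), fun n hn => ?_⟩
    have hn1 : 1 ≤ n := le_trans (by omega) (le_trans (le_max_right N1 (K+1)) hn)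
    have hnN1 : N1 ≤ n := le_trans (le_max_left _ _) hn
    have hnK : K + 1 ≤ n := le_trans (le_max_right _ _) hn
    have hn0 : (0 : ℝ) < n := by exact_mod_cast Nat.pos_of_ne_zero (by omega)
    have hCle : C n ≤ ε / 2 := by
      rw [hCeq n hn1]
      apply Finset.sup'_le
      intro k hk
      rw [Finset.mem_Icc] at hk
      by_cases hkK : k ≤ K
      · have hs : Real.sqrt ((k : ℝ) / n) ≤ Real.sqrt ((K : ℝ) / n) := by
          apply Real.sqrt_le_sqrt
          gcongr

        have hb1 : b k ≤ b 1 := hbanti hk.1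
        have hmul : Real.sqrt ((k : ℝ) / n) * b k ≤ Real.sqrt ((K : ℝ) / n) * b 1 :=
          mul_le_mul hs hb1 (le_of_lt (hbpos k)) (Real.sqrt_nonneg _)
        have hlt : Real.sqrt ((K : ℝ) / n) * b 1 < ε / 2 := by
          have := hN1 n hnN1
          rw [Real.dist_eq, sub_zero] at this
          exact lt_of_abs_lt this
        linarith
      · have hKk : K ≤ k := by omega
        calc Real.sqrt ((k : ℝ) / n) * b k ≤ b k := hterm_le_b n k hk.1 hk.2
          _ ≤ ε / 2 := le_of_lt (hbK k hKk)
    rw [Real.dist_eq, sub_zero, abs_of_pos (hCpos n hn1)]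
    linarith
  · -- decreasing
    intro n hn
    have hn1 : 1 ≤ n + 1 := by omega
    have hn0 : (0 : ℝ) < n := by exact_mod_cast Nat.pos_of_ne_zero (by omega)
    rw [hCeq (n+1) hn1]
    apply Finset.sup'_le
    intro k hk
    rw [Finset.mem_Icc] at hk
    by_cases hkn : k ≤ n
    · calc Real.sqrt ((k : ℝ) / ((n : ℕ) + 1 : ℕ)) * b k
          ≤ Real.sqrt ((k : ℝ) / n) * b k := by
            apply mul_le_mul_of_nonneg_right ?_ (le_of_lt (hbpos k))
            apply Real.sqrt_le_sqrt
            gcongr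
            omega
        _ ≤ C n := by
            rw [hCeq n hn]
            exact Finset.le_sup' (fun k : ℕ => Real.sqrt ((k : ℝ) / n) * b k)
              (Finset.mem_Icc.mpr ⟨hk.1, hkn⟩)
    · have hk' : k = n + 1 := by omega
      subst hk'
      rw [hsqrt_self (n+1) hn1, one_mul]
      exact le_trans (hbanti (Nat.le_succ n)) (hbC n hn)
  · -- C n ≤ √((n+1)/n) * C (n+1)
    intro n hn
    have hn1 : 1 ≤ n + 1 := by omega
    have hn0 : (0 : ℝ) < n := by exact_mod_cast Nat.pos_of_ne_zero (by omega)
    rw [hCeq n hn]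
    apply Finset.sup'_le
    intro k hk
    rw [Finset.mem_Icc] at hk
    have hkey : Real.sqrt ((k : ℝ) / n) =
        Real.sqrt (((n : ℝ) + 1) / n) * Real.sqrt ((k : ℝ) / (((n : ℕ) + 1 : ℕ) : ℝ)) := by
      rw [← Real.sqrt_mul (by positivity)]
      congr 1
      push_cast
      field_simp
    have hterm : Real.sqrt ((k : ℝ) / (((n : ℕ) + 1 : ℕ) : ℝ)) * b k ≤ C (n + 1) := by
      rw [hCeq (n+1) hn1]
      exact Finset.le_sup' (fun k : ℕ => Real.sqrt ((k : ℝ) / ((n : ℕ) + 1 : ℕ)) * b k)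
        (Finset.mem_Icc.mpr ⟨hk.1, by omega⟩)
    calc Real.sqrt ((k : ℝ) / n) * b k
        = Real.sqrt (((n : ℝ) + 1) / n) *
            (Real.sqrt ((k : ℝ) / (((n : ℕ) + 1 : ℕ) : ℝ)) * b k) := by
          rw [hkey]; ring
      _ ≤ Real.sqrt (((n : ℝ) + 1) / n) * C (n + 1) :=
          mul_le_mul_of_nonneg_left hterm (Real.sqrt_nonneg _)
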